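/- Let f : ℝⁿ → ℝ be convex and differentiable with L-Lipschitz continuous gradient. Then for all x₁, x₂, x₃ ∈ ℝⁿ, ⟨x₁ - x₂, ∇f(x₃) - ∇f(x₁)⟩ ≤ (L/4)‖x₂ - x₃‖². -/

import Mathlib

open scoped RealInnerProductSpace

section Aux

variable {E : Type*} [NormedAddCommGroup E] [InnerProductSpace ℝ E] [CompleteSpace E]

lemma aux_hasDerivAt_line {f : E → ℝ} {f' : E → E}
    (hgrad : ∀ x, HasGradientAt f (f' x) x) (x y : E) (t : ℝ) :
    HasDerivAt (fun s : ℝ => f (x + s • (y - x))) ⟪f' (x + t • (y - x)), y - x⟫ t := by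
  have hc : HasDerivAt (fun s : ℝ => x + s • (y - x)) (y - x) t := by
    simpa using ((hasDerivAt_id t).smul_const (y - x)).const_add x
  have hf := hasGradientAt_iff_hasFDerivAt.mp (hgrad (x + t • (y - x)))
  have := hf.comp_hasDerivAt t hc
  simpa [InnerProductSpace.toDual_apply_apply, Function.comp_def] using this

lemma aux_first_order {f : E → ℝ} {f' : E → E}
    (hconv : ConvexOn ℝ Set.univ f) (hgrad : ∀ x, HasGradientAt f (f' x) x)
    (x y : E) : f x + ⟪f' x, y - x⟫ ≤ f y := by
  set g : ℝ → ℝ := fun s => f (x + s • (y - x)) with hg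
  have hgc : ConvexOn ℝ Set.univ g := by
    have h1 := hconv.comp_affineMap (AffineMap.lineMap x y : ℝ →ᵃ[ℝ] E)
    have heq : (f ∘ (AffineMap.lineMap x y : ℝ →ᵃ[ℝ] E)) = g := by
      funext s
      simp [g, AffineMap.lineMap_apply, add_comm]
    rw [heq] at h1
    simpa using h1
  have hslope := hgc.le_slope_of_hasDerivAt (Set.mem_univ (0:ℝ)) (Set.mem_univ (1:ℝ))
    zero_lt_one (aux_hasDerivAt_line hgrad x y 0)
  have h0 : g 0 = f x := by simp [g]
  have h1 : g 1 = f y := by simp [g]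
  rw [slope_def_field] at hslope
  simp only [zero_smul, add_zero] at hslope
  rw [h0, h1] at hslope
  have : ⟪f' x, y - x⟫ ≤ f y - f x := by
    simpa using hslope
  linarith

lemma aux_descent {f : E → ℝ} {f' : E → E} {L : ℝ}
    (hgrad : ∀ x, HasGradientAt f (f' x) x)
    (hlip : ∀ x y, ‖f' x - f' y‖ ≤ L * ‖x - y‖)
    (x y : E) : f y ≤ f x + ⟪f' x, y - x⟫ + L / 2 * ‖y - x‖ ^ 2 := by
  set A : ℝ := ⟪f' x, y - x⟫ with hA
  set B : ℝ := L / 2 * ‖y - x‖ ^ 2 with hB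
  set h : ℝ → ℝ := fun t => f (x + t • (y - x)) - t * A - t ^ 2 * B with hh
  have hderiv : ∀ t : ℝ, HasDerivAt h
      (⟪f' (x + t • (y - x)), y - x⟫ - A - 2 * t * B) t := by
    intro t
    have h1 := aux_hasDerivAt_line hgrad x y t
    have h2 : HasDerivAt (fun t : ℝ => t * A) A t := by
      simpa using (hasDerivAt_id t).mul_const A
    have h3 : HasDerivAt (fun t : ℝ => t ^ 2 * B) (2 * t * B) t := by
      simpa using (hasDerivAt_pow 2 t).mul_const B
    exact (h1.sub h2).sub h3
  have hdnp : ∀ t ∈ Set.Ioo (0:ℝ) 1,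
      deriv h t ≤ 0 := by
    intro t ht
    rw [(hderiv t).deriv]
    have hsplit : ⟪f' (x + t • (y - x)), y - x⟫ - A
        = ⟪f' (x + t • (y - x)) - f' x, y - x⟫ := by
      rw [inner_sub_left, hA]
    rw [hsplit]
    have hb1 : ⟪f' (x + t • (y - x)) - f' x, y - x⟫
        ≤ ‖f' (x + t • (y - x)) - f' x‖ * ‖y - x‖ := real_inner_le_norm _ _
    have hb2 : ‖f' (x + t • (y - x)) - f' x‖ ≤ L * (t * ‖y - x‖) := by
      have := hlip (x + t • (y - x)) x
      have he : x + t • (y - x) - x = t • (y - x) := by abel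
      rw [he, norm_smul, Real.norm_eq_abs, abs_of_pos ht.1] at this
      exact this
    have hyx : (0:ℝ) ≤ ‖y - x‖ := norm_nonneg _
    nlinarith [hb1, hb2, ht.1.le, sq_nonneg (‖y - x‖)]
  have hanti : AntitoneOn h (Set.Icc (0:ℝ) 1) := by
    apply antitoneOn_of_deriv_nonpos (convex_Icc 0 1)
    · exact fun t _ => (hderiv t).differentiableAt.continuousAt.continuousWithinAt
    · intro t _
      exact (hderiv t).differentiableAt.differentiableWithinAt
    · intro t ht
      rw [interior_Icc] at ht
      exact hdnp t ht
  have h10 : h 1 ≤ h 0 :=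
    hanti (Set.mem_Icc.mpr ⟨le_refl 0, zero_le_one⟩)
      (Set.mem_Icc.mpr ⟨zero_le_one, le_refl 1⟩) zero_le_one
  have hh0 : h 0 = f x := by simp [h]
  have hh1 : h 1 = f y - A - B := by simp [h]
  rw [hh0, hh1] at h10
  linarith

lemma aux_half_coco {f : E → ℝ} {f' : E → E} {L : ℝ}
    (hconv : ConvexOn ℝ Set.univ f) (hgrad : ∀ x, HasGradientAt f (f' x) x)
    (hlip : ∀ x y, ‖f' x - f' y‖ ≤ L * ‖x - y‖) (hL : 0 < L)
    (x y : E) : f x + ⟪f' x, y - x⟫ + 1 / (2 * L) * ‖f' y - f' x‖ ^ 2 ≤ f y := by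
  set φ : E → ℝ := fun z => f z - ⟪f' x, z⟫ with hφ
  set φ' : E → E := fun z => f' z - f' x with hφ'
  have hφgrad : ∀ z, HasGradientAt φ (φ' z) z := by
    intro z
    rw [hasGradientAt_iff_hasFDerivAt]
    have hlin : HasFDerivAt (fun z : E => ⟪f' x, z⟫)
        (InnerProductSpace.toDual ℝ E (f' x)) z := by
      have := (InnerProductSpace.toDual ℝ E (f' x)).hasFDerivAt (x := z)
      convert this using 1
      ext w
      simp [InnerProductSpace.toDual_apply_apply]
    have := (hasGradientAt_iff_hasFDerivAt.mp (hgrad z)).sub hlin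
    exact this.congr_fderiv (by simp [φ', map_sub])
  have hφconv : ConvexOn ℝ Set.univ φ := by
    refine ⟨convex_univ, fun u _ v _ a b ha hb hab => ?_⟩
    have := hconv.2 (Set.mem_univ u) (Set.mem_univ v) ha hb hab
    simp only [φ, smul_eq_mul, inner_add_right, real_inner_smul_right] at this ⊢
    linarith
  have hφlip : ∀ z w, ‖φ' z - φ' w‖ ≤ L * ‖z - w‖ := by
    intro z w
    have : φ' z - φ' w = f' z - f' w := by simp [φ']
    rw [this]
    exact hlip z w
  set g : E := f' y - f' x with hgdef
  set z : E := y - L⁻¹ • g with hz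
  have h1 : φ x ≤ φ z := by
    have := aux_first_order hφconv hφgrad x z
    have hzero : φ' x = 0 := by simp [φ']
    rw [hzero] at this
    simpa using this
  have h2 := aux_descent hφgrad hφlip y z
  have hzy : z - y = -(L⁻¹ • g) := by simp [hz]
  have hinner : ⟪φ' y, z - y⟫ = -(L⁻¹ * ‖g‖ ^ 2) := by
    rw [hzy, inner_neg_right, real_inner_smul_right]
    have h : ⟪φ' y, g⟫ = ‖g‖ ^ 2 := real_inner_self_eq_norm_sq g
    rw [h]
  have hnorm : ‖z - y‖ ^ 2 = (L⁻¹) ^ 2 * ‖g‖ ^ 2 := by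
    rw [hzy, norm_neg, norm_smul, Real.norm_eq_abs, abs_of_pos (inv_pos.mpr hL)]
    ring
  rw [hinner, hnorm] at h2
  have hφy : φ y = f y - ⟪f' x, y⟫ := rfl
  have hiy : ⟪f' x, y - x⟫ = ⟪f' x, y⟫ - ⟪f' x, x⟫ := by rw [inner_sub_right]
  have hfield : -(L⁻¹ * ‖g‖ ^ 2) + L / 2 * ((L⁻¹) ^ 2 * ‖g‖ ^ 2)
      = -(1 / (2 * L) * ‖g‖ ^ 2) := by
    field_simp
    ring
  rw [hφy] at h2
  simp only [hφ] at h1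
  rw [hiy]
  linarith [h1, h2, hfield.symm.le, hfield.le]

lemma aux_coco {f : E → ℝ} {f' : E → E} {L : ℝ}
    (hconv : ConvexOn ℝ Set.univ f) (hgrad : ∀ x, HasGradientAt f (f' x) x)
    (hlip : ∀ x y, ‖f' x - f' y‖ ≤ L * ‖x - y‖) (hL : 0 < L)
    (x y : E) : ‖f' y - f' x‖ ^ 2 ≤ L * ⟪f' y - f' x, y - x⟫ := by
  have h1 := aux_half_coco hconv hgrad hlip hL x y
  have h2 := aux_half_coco hconv hgrad hlip hL y x
  have hrev : ‖f' x - f' y‖ = ‖f' y - f' x‖ := norm_sub_rev _ _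
  rw [hrev] at h2
  have hin : ⟪f' y - f' x, y - x⟫
      = ⟪f' y, y - x⟫ - ⟪f' x, y - x⟫ := inner_sub_left _ _ _
  have hxy : ⟪f' y, x - y⟫ = -⟪f' y, y - x⟫ := by
    rw [show x - y = -(y - x) by abel, inner_neg_right]
  rw [hxy] at h2
  have hdiv : 2 * (1 / (2 * L)) * ‖f' y - f' x‖ ^ 2
      ≤ ⟪f' y - f' x, y - x⟫ := by
    rw [hin]; linarith
  have : 1 / L * ‖f' y - f' x‖ ^ 2 ≤ ⟪f' y - f' x, y - x⟫ := by
    have he : 2 * (1 / (2 * L)) = 1 / L := by field_simp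
    rwa [he] at hdiv
  calc ‖f' y - f' x‖ ^ 2 = L * (1 / L * ‖f' y - f' x‖ ^ 2) := by
        field_simp
    _ ≤ L * ⟪f' y - f' x, y - x⟫ := by
        exact mul_le_mul_of_nonneg_left this hL.le

end Aux

theorem stmt_0 {n : ℕ} (f : EuclideanSpace ℝ (Fin n) → ℝ)
    (f' : EuclideanSpace ℝ (Fin n) → EuclideanSpace ℝ (Fin n)) (L : ℝ) (hL : 0 ≤ L)
    (hconv : ConvexOn ℝ Set.univ f)
    (hgrad : ∀ x, HasGradientAt f (f' x) x)
    (hlip : ∀ x y, ‖f' x - f' y‖ ≤ L * ‖x - y‖) :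
    ∀ x₁ x₂ x₃ : EuclideanSpace ℝ (Fin n),
      ⟪x₁ - x₂, f' x₃ - f' x₁⟫ ≤ L / 4 * ‖x₂ - x₃‖ ^ 2 := by
  intro x₁ x₂ x₃
  rcases hL.eq_or_lt with h0 | hLpos
  · -- L = 0 : gradient is constant
    have h := hlip x₃ x₁
    rw [← h0, zero_mul] at h
    have hz : f' x₃ - f' x₁ = 0 := norm_le_zero_iff.mp h
    rw [hz, inner_zero_right, ← h0]
    positivity
  · set g : EuclideanSpace ℝ (Fin n) := f' x₃ - f' x₁ with hg
    have hA := aux_coco hconv hgrad hlip hLpos x₁ x₃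
    have hB : ⟪x₃ - x₂, g⟫ ≤ ‖x₃ - x₂‖ * ‖g‖ := real_inner_le_norm _ _
    have hsplit : ⟪x₁ - x₂, g⟫ = ⟪x₁ - x₃, g⟫ + ⟪x₃ - x₂, g⟫ := by
      rw [← inner_add_left]
      congr 1
      abel
    have hneg : ⟪x₁ - x₃, g⟫ = -⟪g, x₃ - x₁⟫ := by
      rw [show x₁ - x₃ = -(x₃ - x₁) by abel, inner_neg_left, real_inner_comm]
    have hcc : ‖g‖ ^ 2 ≤ L * ⟪g, x₃ - x₁⟫ := by
      rw [hg, real_inner_comm]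
      rw [real_inner_comm] at hA
      exact hA
    have hc : ‖x₂ - x₃‖ = ‖x₃ - x₂‖ := norm_sub_rev _ _
    rw [hsplit, hneg, hc]
    nlinarith [hcc, hB, sq_nonneg (L * ‖x₃ - x₂‖ - 2 * ‖g‖), hLpos,
      norm_nonneg g, norm_nonneg (x₃ - x₂), mul_le_mul_of_nonneg_left hB hLpos.le]
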